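/- Let F₀, F₁, …, F_m be homogeneous polynomials in variables (t₀,t₁,t₂) over ℂ such that each F₁,…,F_m has positive degree in t₀, all of F₁,…,F_m have the same total degree, and gcd(F₁,…,F_m) = 1. Set F(c, t) = c₁F₁ + ⋯ + c_mF_m with new indeterminates c = (c₁,…,c_m), and R(c, t₁, t₂) = Res_{t₀}(F₀, F). If (t₁⁰,t₂⁰) ∈ ℂ² \ {0} is a common zero of the content Cont_c(R) such that the leading coefficients of F₀ and F with respect to t₀ do not vanish at (t₁⁰,t₂⁰), then there exists t₀⁰ ∈ ℂ with Fᵢ(t₀⁰,t₁⁰,t₂⁰) = 0 for all i = 0,…,m. -/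

import Mathlib

open Polynomial

/-- The Sylvester matrix of two polynomials. -/
noncomputable def sylvesterMatrix {R : Type*} [CommRing R] (f g : Polynomial R) :
    Matrix (Fin (f.natDegree + g.natDegree)) (Fin (f.natDegree + g.natDegree)) R :=
  Matrix.of fun i j =>
    if (i : ℕ) < g.natDegree then
      (if (i : ℕ) ≤ (j : ℕ) ∧ (j : ℕ) ≤ (i : ℕ) + f.natDegree then
        f.coeff (f.natDegree + i - j) else 0)
    else
      (if (i : ℕ) - g.natDegree ≤ (j : ℕ) ∧ (j : ℕ) ≤ ((i : ℕ) - g.natDegree) + g.natDegree then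
        g.coeff (g.natDegree + ((i : ℕ) - g.natDegree) - j) else 0)

/-- The resultant of two polynomials, as the determinant of their Sylvester matrix. -/
noncomputable def resultant {R : Type*} [CommRing R] (f g : Polynomial R) : R :=
  (sylvesterMatrix f g).det

/-- The resultant with respect to `t₀` of two polynomials in `R[t₀,…,t_n]`. -/
noncomputable def resT0 {R : Type*} [CommRing R] {n : ℕ} (F G : MvPolynomial (Fin (n + 1)) R) :
    MvPolynomial (Fin n) R :=
  _root_.resultant (MvPolynomial.finSuccEquiv R n F) (MvPolynomial.finSuccEquiv R n G)

/-- The generic linear combination `F(c,t) = c₁F₁ + ⋯ + c_mF_m`, an element of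
`(ℂ[c₁,…,c_m])[t₀,t₁,t₂]`. -/
noncomputable def genericComb (m : ℕ) (F : Fin (m + 1) → MvPolynomial (Fin 3) ℂ) :
    MvPolynomial (Fin 3) (MvPolynomial (Fin m) ℂ) :=
  ∑ i : Fin m,
    (MvPolynomial.C (MvPolynomial.X i) : MvPolynomial (Fin 3) (MvPolynomial (Fin m) ℂ)) *
      MvPolynomial.map (MvPolynomial.C : ℂ →+* MvPolynomial (Fin m) ℂ) (F i.succ)

/-- The coefficient, as a polynomial in `ℂ[t₁,t₂]`, of the monomial `c^e` in a
polynomial of `(ℂ[c₁,…,c_m])[t₁,t₂]`. -/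
noncomputable def cCoeff {m : ℕ} (e : Fin m →₀ ℕ)
    (P : MvPolynomial (Fin 2) (MvPolynomial (Fin m) ℂ)) : MvPolynomial (Fin 2) ℂ :=
  P.support.sum fun μ => MvPolynomial.monomial μ (MvPolynomial.coeff e (MvPolynomial.coeff μ P))

section Helpers

/-! ### Auxiliary lemmas about the Sylvester resultant over `ℂ` -/

lemma sum_C_mul_X_pow_coeff {n : ℕ} (a : Fin n → ℂ) (j : Fin n) :
    (∑ i : Fin n, C (a i) * X ^ (i : ℕ)).coeff (j : ℕ) = a j := by
  rw [finset_sum_coeff, Finset.sum_eq_single j]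
  · simp
  · intro i _ hij
    simp only [coeff_C_mul, coeff_X_pow]
    rw [if_neg (fun h => hij (Fin.ext h.symm)), mul_zero]
  · simp

lemma degree_sum_C_mul_X_pow_lt {n : ℕ} (a : Fin n → ℂ) :
    (∑ i : Fin n, C (a i) * X ^ (i : ℕ)).degree < (n : WithBot ℕ) := by
  apply lt_of_le_of_lt (degree_sum_le _ _)
  rw [Finset.sup_lt_iff (by exact_mod_cast WithBot.bot_lt_coe n)]
  intro i _
  exact lt_of_le_of_lt (degree_C_mul_X_pow_le _ _) (by exact_mod_cast i.isLt)

lemma coeff_C_mul_reverse_mul_X_pow (f : ℂ[X]) (a : ℂ) (i n : ℕ) :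
    (C a * (f.reverse * X ^ i)).coeff n =
      a * (if i ≤ n ∧ n ≤ i + f.natDegree then f.coeff (f.natDegree + i - n) else 0) := by
  rw [coeff_C_mul, coeff_mul_X_pow']
  congr 1
  by_cases h1 : i ≤ n
  · by_cases h2 : n ≤ i + f.natDegree
    · rw [if_pos h1, if_pos ⟨h1, h2⟩, coeff_reverse, revAt_le (by omega)]
      congr 1; omega
    · rw [if_pos h1, if_neg (fun h => h2 h.2), coeff_reverse,
        revAt_eq_self_of_lt (by omega)]
      exact coeff_eq_zero_of_natDegree_lt (by omega)
  · rw [if_neg h1, if_neg (fun h => h1 h.1)]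

lemma resultant_eq_zero_common_root (f g : ℂ[X]) (hf : f ≠ 0) (hg : g ≠ 0)
    (h : _root_.resultant f g = 0) : ∃ z : ℂ, f.eval z = 0 ∧ g.eval z = 0 := by
  classical
  obtain ⟨v, hv, hvM⟩ := Matrix.exists_vecMul_eq_zero_iff.mpr h
  set a : Fin g.natDegree → ℂ :=
    fun i => v ⟨(i : ℕ), by have := i.isLt; omega⟩ with ha
  set b : Fin f.natDegree → ℂ :=
    fun k => v ⟨g.natDegree + (k : ℕ), by have := k.isLt; omega⟩ with hb
  set A : ℂ[X] := ∑ i : Fin g.natDegree, C (a i) * X ^ (i : ℕ) with hA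
  set B : ℂ[X] := ∑ k : Fin f.natDegree, C (b k) * X ^ (k : ℕ) with hB
  have split : ∀ (t : Fin (f.natDegree + g.natDegree) → ℂ), (∑ i, t i)
      = (∑ i : Fin g.natDegree, t ⟨(i : ℕ), by have := i.isLt; omega⟩)
        + ∑ k : Fin f.natDegree, t ⟨g.natDegree + (k : ℕ), by have := k.isLt; omega⟩ := by
    intro t
    have e1 : ∑ i : Fin (f.natDegree + g.natDegree), t i
        = ∑ i : Fin (g.natDegree + f.natDegree), t (finCongr (by omega) i) :=
      (Fintype.sum_equiv (finCongr (by omega)) _ t (fun i => rfl)).symm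
    rw [e1, Fin.sum_univ_add]
    congr 1
  have expandA : A * f.reverse
      = ∑ i : Fin g.natDegree, C (a i) * (f.reverse * X ^ (i : ℕ)) := by
    rw [hA, Finset.sum_mul]; exact Finset.sum_congr rfl fun i _ => by ring
  have expandB : B * g.reverse
      = ∑ k : Fin f.natDegree, C (b k) * (g.reverse * X ^ (k : ℕ)) := by
    rw [hB, Finset.sum_mul]; exact Finset.sum_congr rfl fun k _ => by ring
  have hcoeff : ∀ n : ℕ, (A * f.reverse + B * g.reverse).coeff n =
      (∑ i : Fin g.natDegree, a i *
        (if (i : ℕ) ≤ n ∧ n ≤ (i : ℕ) + f.natDegree then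
          f.coeff (f.natDegree + (i : ℕ) - n) else 0))
      + ∑ k : Fin f.natDegree, b k *
        (if (k : ℕ) ≤ n ∧ n ≤ (k : ℕ) + g.natDegree then
          g.coeff (g.natDegree + (k : ℕ) - n) else 0) := by
    intro n
    rw [coeff_add, expandA, expandB, finset_sum_coeff, finset_sum_coeff]
    congr 1
    · exact Finset.sum_congr rfl fun i _ => coeff_C_mul_reverse_mul_X_pow f (a i) _ n
    · exact Finset.sum_congr rfl fun k _ => coeff_C_mul_reverse_mul_X_pow g (b k) _ n
  have key : A * f.reverse + B * g.reverse = 0 := by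
    ext n
    rw [hcoeff n, coeff_zero]
    by_cases hn : n < f.natDegree + g.natDegree
    · have h0 := congrFun hvM ⟨n, hn⟩
      rw [Matrix.vecMul, dotProduct] at h0
      rw [split (fun i => v i * sylvesterMatrix f g i ⟨n, hn⟩), Pi.zero_apply] at h0
      refine Eq.trans ?_ h0
      congr 1
      · apply Finset.sum_congr rfl
        intro i _
        have hi := i.isLt
        show _ = v _ * sylvesterMatrix f g ⟨(i : ℕ), _⟩ ⟨n, hn⟩
        simp only [sylvesterMatrix, Matrix.of_apply]
        rw [if_pos (show ((⟨(i : ℕ), by have := i.isLt; omega⟩ :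
          Fin (f.natDegree + g.natDegree)) : ℕ) < g.natDegree from hi)]
      · apply Finset.sum_congr rfl
        intro k _
        have hk := k.isLt
        show _ = v _ * sylvesterMatrix f g ⟨g.natDegree + (k : ℕ), _⟩ ⟨n, hn⟩
        simp only [sylvesterMatrix, Matrix.of_apply]
        rw [if_neg (show ¬ ((⟨g.natDegree + (k : ℕ), by have := k.isLt; omega⟩ :
          Fin (f.natDegree + g.natDegree)) : ℕ) < g.natDegree by simp)]
        simp only [add_tsub_cancel_left]
        rfl
    · rw [Finset.sum_eq_zero, Finset.sum_eq_zero, add_zero]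
      · intro k _
        have hk := k.isLt
        rw [if_neg (by omega), mul_zero]
      · intro i _
        have hi := i.isLt
        rw [if_neg (by omega), mul_zero]
  have hABne : ¬ (A = 0 ∧ B = 0) := by
    rintro ⟨hA0, hB0⟩
    apply hv
    funext i
    rcases lt_or_ge (i : ℕ) g.natDegree with hi | hi
    · have h1 := sum_C_mul_X_pow_coeff a ⟨(i : ℕ), hi⟩
      rw [← hA, hA0, coeff_zero] at h1
      have h2 : a ⟨(i : ℕ), hi⟩ = v i := congrArg v (Fin.ext rfl)
      rw [Pi.zero_apply, ← h2, ← h1]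
    · have hik : (i : ℕ) - g.natDegree < f.natDegree := by have := i.isLt; omega
      have h1 := sum_C_mul_X_pow_coeff b ⟨(i : ℕ) - g.natDegree, hik⟩
      rw [← hB, hB0, coeff_zero] at h1
      have h2 : b ⟨(i : ℕ) - g.natDegree, hik⟩ = v i :=
        congrArg v (Fin.ext (by simp only [Fin.val_mk]; omega))
      rw [Pi.zero_apply, ← h2, ← h1]
  have hrf : f.reverse ≠ 0 := fun hc => hf (reverse_eq_zero.mp hc)
  have hrg : g.reverse ≠ 0 := fun hc => hg (reverse_eq_zero.mp hc)
  by_cases h0 : f.coeff 0 = 0 ∧ g.coeff 0 = 0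
  · exact ⟨0, by rw [← coeff_zero_eq_eval_zero]; exact h0.1,
      by rw [← coeff_zero_eq_eval_zero]; exact h0.2⟩
  have hnc : ¬ IsCoprime f.reverse g.reverse := by
    intro hcop
    rcases not_and_or.mp h0 with hf0 | hg0
    · have hdvd : f.reverse ∣ B := by
        apply hcop.dvd_of_dvd_mul_right
        exact ⟨-A, by linear_combination key⟩
      have hdegrf : (f.natDegree : WithBot ℕ) ≤ f.reverse.degree := by
        apply le_degree_of_ne_zero
        rw [coeff_reverse, revAt_le le_rfl, Nat.sub_self]
        exact hf0
      have hB0 : B = 0 := by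
        by_contra hB0
        have h2 := degree_le_of_dvd hdvd hB0
        have h3 := degree_sum_C_mul_X_pow_lt b
        rw [← hB] at h3
        exact absurd (lt_of_le_of_lt (le_trans hdegrf h2) h3) (lt_irrefl _)
      have hA0 : A = 0 := by
        have h2 : A * f.reverse = 0 := by rw [hB0] at key; simpa using key
        rcases mul_eq_zero.mp h2 with h3 | h3
        · exact h3
        · exact absurd h3 hrf
      exact hABne ⟨hA0, hB0⟩
    · have hdvd : g.reverse ∣ A := by
        apply hcop.symm.dvd_of_dvd_mul_right
        exact ⟨-B, by linear_combination key⟩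
      have hdegrg : (g.natDegree : WithBot ℕ) ≤ g.reverse.degree := by
        apply le_degree_of_ne_zero
        rw [coeff_reverse, revAt_le le_rfl, Nat.sub_self]
        exact hg0
      have hA0 : A = 0 := by
        by_contra hA0
        have h2 := degree_le_of_dvd hdvd hA0
        have h3 := degree_sum_C_mul_X_pow_lt a
        rw [← hA] at h3
        exact absurd (lt_of_le_of_lt (le_trans hdegrg h2) h3) (lt_irrefl _)
      have hB0 : B = 0 := by
        have h2 : B * g.reverse = 0 := by rw [hA0] at key; simpa using key
        rcases mul_eq_zero.mp h2 with h3 | h3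
        · exact h3
        · exact absurd h3 hrg
      exact hABne ⟨hA0, hB0⟩
  have hd0 : EuclideanDomain.gcd f.reverse g.reverse ≠ 0 :=
    fun hc => hrf ((EuclideanDomain.gcd_eq_zero_iff.mp hc).1)
  have hdu : ¬ IsUnit (EuclideanDomain.gcd f.reverse g.reverse) :=
    fun hu => hnc (EuclideanDomain.gcd_isUnit_iff.mp hu)
  have hdeg : (EuclideanDomain.gcd f.reverse g.reverse).degree ≠ 0 :=
    fun hc => hdu (isUnit_iff_degree_eq_zero.mpr hc)
  obtain ⟨ζ, hζ⟩ := IsAlgClosed.exists_root _ hdeg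
  have hζf : f.reverse.eval ζ = 0 :=
    eval_eq_zero_of_dvd_of_eval_eq_zero (EuclideanDomain.gcd_dvd_left _ _) hζ
  have hζg : g.reverse.eval ζ = 0 :=
    eval_eq_zero_of_dvd_of_eval_eq_zero (EuclideanDomain.gcd_dvd_right _ _) hζ
  have hζ0 : ζ ≠ 0 := by
    rintro rfl
    rw [← coeff_zero_eq_eval_zero, coeff_zero_reverse] at hζf
    exact (leadingCoeff_ne_zero.mpr hf) hζf
  letI : Invertible (ζ⁻¹) := invertibleOfNonzero (inv_ne_zero hζ0)
  have hio : ⅟(ζ⁻¹) = ζ := by rw [invOf_eq_inv, inv_inv]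
  refine ⟨ζ⁻¹, ?_, ?_⟩
  · have h1 : eval₂ (RingHom.id ℂ) (⅟(ζ⁻¹)) f.reverse = 0 := by
      rw [hio]; exact hζf
    exact (eval₂_reverse_eq_zero_iff (RingHom.id ℂ) (ζ⁻¹) f).mp h1
  · have h1 : eval₂ (RingHom.id ℂ) (⅟(ζ⁻¹)) g.reverse = 0 := by
      rw [hio]; exact hζg
    exact (eval₂_reverse_eq_zero_iff (RingHom.id ℂ) (ζ⁻¹) g).mp h1

lemma resultant_map {R S : Type*} [CommRing R] [CommRing S] (φ : R →+* S) (f g : R[X])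
    (h1 : (f.map φ).natDegree = f.natDegree) (h2 : (g.map φ).natDegree = g.natDegree) :
    _root_.resultant (f.map φ) (g.map φ) = φ (_root_.resultant f g) := by
  unfold _root_.resultant
  rw [RingHom.map_det]
  have hd : (f.map φ).natDegree + (g.map φ).natDegree = f.natDegree + g.natDegree := by
    rw [h1, h2]
  have hmat : sylvesterMatrix (f.map φ) (g.map φ)
      = ((sylvesterMatrix f g).map φ).submatrix (finCongr hd) (finCongr hd) := by
    ext i j
    simp only [sylvesterMatrix, Matrix.submatrix_apply, Matrix.map_apply, Matrix.of_apply,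
      finCongr_apply, Fin.coe_cast, h1, h2, coeff_map, apply_ite φ, map_zero]
  rw [hmat, Matrix.det_submatrix_equiv_self]
  rfl

lemma finSuccEquiv_map {R S : Type*} [CommRing R] [CommRing S] (φ : R →+* S) (n : ℕ)
    (P : MvPolynomial (Fin (n + 1)) R) :
    MvPolynomial.finSuccEquiv S n (MvPolynomial.map φ P)
      = Polynomial.map (MvPolynomial.map φ) (MvPolynomial.finSuccEquiv R n P) := by
  have h : ((MvPolynomial.finSuccEquiv S n :
        MvPolynomial (Fin (n + 1)) S →+* Polynomial (MvPolynomial (Fin n) S)).comp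
          (MvPolynomial.map φ))
      = (Polynomial.mapRingHom (MvPolynomial.map φ)).comp
          (MvPolynomial.finSuccEquiv R n :
            MvPolynomial (Fin (n + 1)) R →+* Polynomial (MvPolynomial (Fin n) R)) := by
    apply MvPolynomial.ringHom_ext
    · intro r
      simp [MvPolynomial.finSuccEquiv_apply]
    · intro i
      refine Fin.cases ?_ ?_ i <;>
        simp [MvPolynomial.finSuccEquiv_X_zero, MvPolynomial.finSuccEquiv_X_succ]
  exact RingHom.congr_fun h P

/-- The specialization `c ↦ c`, `(t₁,t₂) ↦ tv` as a ring hom. -/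
noncomputable def phiTV (m : ℕ) (tv : Fin 2 → ℂ) :
    MvPolynomial (Fin 2) (MvPolynomial (Fin m) ℂ) →+* MvPolynomial (Fin m) ℂ :=
  MvPolynomial.eval₂Hom (RingHom.id _) (fun i => MvPolynomial.C (tv i))

lemma coeff_phiTV {m : ℕ} (tv : Fin 2 → ℂ)
    (P : MvPolynomial (Fin 2) (MvPolynomial (Fin m) ℂ)) (e : Fin m →₀ ℕ) :
    MvPolynomial.coeff e (phiTV m tv P) = MvPolynomial.eval tv (cCoeff e P) := by
  rw [phiTV, MvPolynomial.coe_eval₂Hom, MvPolynomial.eval₂_eq, cCoeff, map_sum,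
    MvPolynomial.coeff_sum]
  apply Finset.sum_congr rfl
  intro μ _
  rw [MvPolynomial.eval_monomial]
  have hprod : (∏ i ∈ μ.support, (MvPolynomial.C (tv i) : MvPolynomial (Fin m) ℂ) ^ μ i)
      = MvPolynomial.C (μ.prod fun n k => tv n ^ k) := by
    rw [Finsupp.prod, map_prod]
    exact Finset.prod_congr rfl fun i _ => by rw [map_pow]
  rw [RingHom.id_apply, hprod, mul_comm, MvPolynomial.coeff_C_mul, mul_comm]

lemma phiTV_eq_zero {m : ℕ} (tv : Fin 2 → ℂ) (g : MvPolynomial (Fin 2) ℂ)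
    (P : MvPolynomial (Fin 2) (MvPolynomial (Fin m) ℂ))
    (hdvd : ∀ e : Fin m →₀ ℕ, g ∣ cCoeff e P) (hgz : MvPolynomial.eval tv g = 0) :
    phiTV m tv P = 0 := by
  apply MvPolynomial.ext
  intro e
  rw [coeff_phiTV, MvPolynomial.coeff_zero]
  obtain ⟨t, ht⟩ := hdvd e
  rw [ht, map_mul, hgz, zero_mul]

lemma phiTV_comp_map_C {m : ℕ} (tv : Fin 2 → ℂ) :
    (phiTV m tv).comp (MvPolynomial.map (MvPolynomial.C : ℂ →+* MvPolynomial (Fin m) ℂ))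
      = (MvPolynomial.C : ℂ →+* MvPolynomial (Fin m) ℂ).comp
          (MvPolynomial.eval tv : MvPolynomial (Fin 2) ℂ →+* ℂ) := by
  apply MvPolynomial.ringHom_ext <;> intro x <;>
    simp [phiTV]

lemma eval_comp_phiTV {m : ℕ} (tv : Fin 2 → ℂ) (a : Fin m → ℂ) :
    (MvPolynomial.eval a : MvPolynomial (Fin m) ℂ →+* ℂ).comp (phiTV m tv)
      = (MvPolynomial.eval tv : MvPolynomial (Fin 2) ℂ →+* ℂ).comp
          (MvPolynomial.map (MvPolynomial.eval a : MvPolynomial (Fin m) ℂ →+* ℂ)) := by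
  apply MvPolynomial.ringHom_ext <;> intro x <;>
    simp [phiTV]

lemma genericComb_map_eval (m : ℕ) (F : Fin (m + 1) → MvPolynomial (Fin 3) ℂ)
    (a : Fin m → ℂ) :
    MvPolynomial.map (MvPolynomial.eval a : MvPolynomial (Fin m) ℂ →+* ℂ) (genericComb m F)
      = ∑ i : Fin m, MvPolynomial.C (a i) * F i.succ := by
  rw [genericComb, map_sum]
  apply Finset.sum_congr rfl
  intro i _
  rw [map_mul, MvPolynomial.map_C, MvPolynomial.eval_X, MvPolynomial.map_map]
  congr 1
  have : (MvPolynomial.eval a : MvPolynomial (Fin m) ℂ →+* ℂ).comp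
      (MvPolynomial.C : ℂ →+* MvPolynomial (Fin m) ℂ) = RingHom.id ℂ := by
    ext r; simp
  rw [this, MvPolynomial.map_id]

end Helpers

/-- generalized resultants: with `F₀,…,F_m` homogeneous,
`F₁,…,F_m` of positive degree in `t₀`, of equal total degree, and with trivial gcd,
set `F = ∑ cᵢFᵢ` and `R = Res_{t₀}(F₀,F)`.  If `(t₁⁰,t₂⁰) ≠ 0` is a zero of the
content `Cont_c(R)` where the `t₀`-leading coefficients of `F₀` and `F` do not vanish,
then there is `t₀⁰` with `Fᵢ(t₀⁰,t₁⁰,t₂⁰) = 0` for all `i = 0,…,m`. -/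

theorem generalized_resultant_intersection (m : ℕ)
    (F : Fin (m + 1) → MvPolynomial (Fin 3) ℂ)
    (degF : Fin (m + 1) → ℕ)
    (hhom : ∀ i, (F i).IsHomogeneous (degF i))
    (N : ℕ) (hsame : ∀ i : Fin (m + 1), i ≠ 0 → degF i = N)
    (hpos : ∀ i : Fin (m + 1), i ≠ 0 → 0 < (F i).degreeOf 0)
    (hgcd : ∀ D : MvPolynomial (Fin 3) ℂ, (∀ i : Fin (m + 1), i ≠ 0 → D ∣ F i) → IsUnit D)
    (tv : Fin 2 → ℂ) (htv : tv ≠ 0)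
    -- `g` is the content of `R = Res_{t₀}(F₀, F(c,·))` with respect to the `c`-variables:
    (g : MvPolynomial (Fin 2) ℂ)
    (hgdvd : ∀ e : Fin m →₀ ℕ,
      g ∣ cCoeff e (resT0 (MvPolynomial.map (MvPolynomial.C : ℂ →+* MvPolynomial (Fin m) ℂ) (F 0))
            (genericComb m F)))
    (hgmax : ∀ D : MvPolynomial (Fin 2) ℂ,
      (∀ e : Fin m →₀ ℕ,
        D ∣ cCoeff e (resT0 (MvPolynomial.map (MvPolynomial.C : ℂ →+* MvPolynomial (Fin m) ℂ)
              (F 0)) (genericComb m F))) → D ∣ g)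
    (hgzero : MvPolynomial.eval tv g = 0)
    -- the leading coefficients w.r.t. `t₀` of `F₀` and of `F(c,·)` do not vanish at `tv`:
    (hlc0 : MvPolynomial.eval tv (MvPolynomial.finSuccEquiv ℂ 2 (F 0)).leadingCoeff ≠ 0)
    (hlcF : MvPolynomial.eval₂ (RingHom.id (MvPolynomial (Fin m) ℂ))
        (fun i => (MvPolynomial.C (tv i) : MvPolynomial (Fin m) ℂ))
        (MvPolynomial.finSuccEquiv (MvPolynomial (Fin m) ℂ) 2 (genericComb m F)).leadingCoeff
        ≠ 0) :
    ∃ z : ℂ, ∀ i : Fin (m + 1), MvPolynomial.eval (Fin.cons z tv) (F i) = 0 := by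
  classical
  by_contra hcon
  push_neg at hcon
  -- Step 1: the specialized resultant vanishes identically (as a polynomial in `c`)
  have hres0 : phiTV m tv (resT0
      (MvPolynomial.map (MvPolynomial.C : ℂ →+* MvPolynomial (Fin m) ℂ) (F 0))
      (genericComb m F)) = 0 :=
    phiTV_eq_zero tv g _ hgdvd hgzero
  set base0 := MvPolynomial.finSuccEquiv ℂ 2 (F 0) with hbase0
  set f0 : ℂ[X] :=
    Polynomial.map (MvPolynomial.eval tv : MvPolynomial (Fin 2) ℂ →+* ℂ) base0 with hf0def
  have hndf0 : f0.natDegree = base0.natDegree :=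
    natDegree_map_of_leadingCoeff_ne_zero _ hlc0
  have hlcf0 : f0.leadingCoeff = MvPolynomial.eval tv base0.leadingCoeff :=
    leadingCoeff_map_of_leadingCoeff_ne_zero _ hlc0
  have hf0ne : f0 ≠ 0 := fun hc => hlc0 (by rw [← hlcf0, hc, leadingCoeff_zero])
  set Q0 := MvPolynomial.finSuccEquiv (MvPolynomial (Fin m) ℂ) 2
    (MvPolynomial.map (MvPolynomial.C : ℂ →+* MvPolynomial (Fin m) ℂ) (F 0)) with hQ0def
  set QG := MvPolynomial.finSuccEquiv (MvPolynomial (Fin m) ℂ) 2 (genericComb m F) with hQGdef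
  have hQ0 : Q0 = Polynomial.map
      (MvPolynomial.map (MvPolynomial.C : ℂ →+* MvPolynomial (Fin m) ℂ)) base0 :=
    finSuccEquiv_map _ 2 (F 0)
  have hinj : Function.Injective
      (MvPolynomial.map (MvPolynomial.C : ℂ →+* MvPolynomial (Fin m) ℂ) :
        MvPolynomial (Fin 2) ℂ → MvPolynomial (Fin 2) (MvPolynomial (Fin m) ℂ)) :=
    MvPolynomial.map_injective _ (MvPolynomial.C_injective _ _)
  have hlcQ0 : phiTV m tv Q0.leadingCoeff
      = MvPolynomial.C (MvPolynomial.eval tv base0.leadingCoeff) := by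
    rw [hQ0, leadingCoeff_map_of_injective hinj]
    exact RingHom.congr_fun (phiTV_comp_map_C tv) base0.leadingCoeff
  have hlcQ0ne : phiTV m tv Q0.leadingCoeff ≠ 0 := by
    rw [hlcQ0]
    simpa using hlc0
  have hlcQGne : phiTV m tv QG.leadingCoeff ≠ 0 := hlcF
  -- Step 2: specialize `(t₁,t₂) ↦ tv` in the resultant
  set q0 := Polynomial.map (phiTV m tv) Q0 with hq0def
  set qG := Polynomial.map (phiTV m tv) QG with hqGdef
  have hresK : _root_.resultant q0 qG = 0 := by
    rw [hq0def, hqGdef, resultant_map _ _ _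
      (natDegree_map_of_leadingCoeff_ne_zero _ hlcQ0ne)
      (natDegree_map_of_leadingCoeff_ne_zero _ hlcQGne)]
    exact hres0
  have hq0f0 : q0 = Polynomial.map (MvPolynomial.C : ℂ →+* MvPolynomial (Fin m) ℂ) f0 := by
    rw [hq0def, hQ0, Polynomial.map_map, hf0def, Polynomial.map_map, phiTV_comp_map_C]
  have hlcq0 : q0.leadingCoeff = MvPolynomial.C f0.leadingCoeff := by
    rw [hq0f0, leadingCoeff_map_of_injective (MvPolynomial.C_injective _ _)]
  have hlcqG : qG.leadingCoeff = phiTV m tv QG.leadingCoeff :=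
    leadingCoeff_map_of_leadingCoeff_ne_zero _ hlcQGne
  -- Step 3: the Zariski argument.  Linear forms attached to the roots of `f0`.
  set S := f0.roots.toFinset with hSdef
  set L : ℂ → MvPolynomial (Fin m) ℂ := fun z =>
    ∑ i : Fin m, MvPolynomial.C (MvPolynomial.eval (Fin.cons z tv) (F i.succ))
      * MvPolynomial.X i with hLdef
  have hevalL : ∀ (z : ℂ) (a : Fin m → ℂ), MvPolynomial.eval a (L z)
      = ∑ i : Fin m, MvPolynomial.eval (Fin.cons z tv) (F i.succ) * a i := by
    intro z a
    rw [hLdef, map_sum]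
    exact Finset.sum_congr rfl fun i _ => by simp
  have hLne : ∀ z ∈ S, L z ≠ 0 := by
    intro z hzS hLz
    rw [hSdef, Multiset.mem_toFinset, mem_roots'] at hzS
    have hz0 : MvPolynomial.eval (Fin.cons z tv) (F 0) = 0 := by
      rw [MvPolynomial.eval_eq_eval_mv_eval']
      exact hzS.2
    obtain ⟨i, hi⟩ := hcon z
    have hine : i ≠ 0 := fun hc => hi (by rw [hc]; exact hz0)
    obtain ⟨j, hj⟩ := Fin.exists_succ_eq_of_ne_zero hine
    apply hi
    rw [← hj]
    have := hevalL z (Pi.single j 1 : Fin m → ℂ)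
    rw [hLz, map_zero] at this
    have hsum : (∑ i : Fin m, MvPolynomial.eval (Fin.cons z tv) (F i.succ)
        * (Pi.single j (1:ℂ) : Fin m → ℂ) i) = MvPolynomial.eval (Fin.cons z tv) (F j.succ) := by
      rw [Finset.sum_eq_single j]
      · simp
      · intro k _ hk
        rw [Pi.single_eq_of_ne hk, mul_zero]
      · simp
    rw [hsum] at this
    exact this.symm
  have hprodne : phiTV m tv QG.leadingCoeff * ∏ z ∈ S, L z ≠ 0 :=
    mul_ne_zero hlcQGne (Finset.prod_ne_zero_iff.mpr hLne)
  have hex : ∃ a : Fin m → ℂ,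
      MvPolynomial.eval a (phiTV m tv QG.leadingCoeff * ∏ z ∈ S, L z) ≠ 0 := by
    by_contra hcc
    push_neg at hcc
    exact hprodne (MvPolynomial.funext fun x => by rw [hcc x, map_zero])
  obtain ⟨a, ha⟩ := hex
  rw [map_mul] at ha
  obtain ⟨ha1, ha2⟩ := mul_ne_zero_iff.mp ha
  rw [map_prod] at ha2
  have haL : ∀ z ∈ S, MvPolynomial.eval a (L z) ≠ 0 :=
    Finset.prod_ne_zero_iff.mp ha2
  -- Step 4: specialize `c ↦ a` in the resultant
  have hlcq0a : MvPolynomial.eval a q0.leadingCoeff ≠ 0 := by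
    rw [hlcq0, MvPolynomial.eval_C]
    rw [hlcf0]
    exact hlc0
  have hlcqGa : MvPolynomial.eval a qG.leadingCoeff ≠ 0 := by
    rw [hlcqG]; exact ha1
  have hres_a : _root_.resultant
      (Polynomial.map (MvPolynomial.eval a : MvPolynomial (Fin m) ℂ →+* ℂ) q0)
      (Polynomial.map (MvPolynomial.eval a : MvPolynomial (Fin m) ℂ →+* ℂ) qG) = 0 := by
    rw [resultant_map _ _ _
      (natDegree_map_of_leadingCoeff_ne_zero _ hlcq0a)
      (natDegree_map_of_leadingCoeff_ne_zero _ hlcqGa), hresK, map_zero]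
  have hmapq0 : Polynomial.map (MvPolynomial.eval a : MvPolynomial (Fin m) ℂ →+* ℂ) q0
      = f0 := by
    rw [hq0f0, Polynomial.map_map]
    have hcomp : (MvPolynomial.eval a : MvPolynomial (Fin m) ℂ →+* ℂ).comp
        (MvPolynomial.C : ℂ →+* MvPolynomial (Fin m) ℂ) = RingHom.id ℂ := by
      ext r; simp
    rw [hcomp, Polynomial.map_id]
  set ga := Polynomial.map (MvPolynomial.eval a : MvPolynomial (Fin m) ℂ →+* ℂ) qG with hgadef
  have hlcga : ga.leadingCoeff ≠ 0 := by
    rw [hgadef, leadingCoeff_map_of_leadingCoeff_ne_zero _ hlcqGa]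
    exact hlcqGa
  have hgane : ga ≠ 0 := fun hc => hlcga (by rw [hc, leadingCoeff_zero])
  rw [hmapq0] at hres_a
  obtain ⟨z, hzf, hzg⟩ := resultant_eq_zero_common_root f0 ga hf0ne hgane hres_a
  -- Step 5: interpret the common root
  have hga2 : ga = Polynomial.map (MvPolynomial.eval tv : MvPolynomial (Fin 2) ℂ →+* ℂ)
      (MvPolynomial.finSuccEquiv ℂ 2
        (MvPolynomial.map (MvPolynomial.eval a : MvPolynomial (Fin m) ℂ →+* ℂ)
          (genericComb m F))) := by
    rw [hgadef, hqGdef, hQGdef, Polynomial.map_map, eval_comp_phiTV,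
      finSuccEquiv_map, Polynomial.map_map]
  have hzg2 : MvPolynomial.eval (Fin.cons z tv)
      (MvPolynomial.map (MvPolynomial.eval a : MvPolynomial (Fin m) ℂ →+* ℂ)
        (genericComb m F)) = 0 := by
    rw [MvPolynomial.eval_eq_eval_mv_eval', ← hga2]
    exact hzg
  rw [genericComb_map_eval] at hzg2
  have hzS : z ∈ S := by
    rw [hSdef, Multiset.mem_toFinset, mem_roots']
    exact ⟨hf0ne, hzf⟩
  apply haL z hzS
  rw [hevalL]
  rw [map_sum] at hzg2
  rw [← hzg2]
  apply Finset.sum_congr rfl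
  intro i _
  rw [map_mul, MvPolynomial.eval_C, mul_comm]
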